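/- Let G be a finite simple graph with m edges and minimum degree δ ≥ 1, and let α > 0 be real. Then SDD_α(G) · ISD_{-α}(G) ≥ δ^α m², i.e., SDD_α(G) ≥ δ^α m² / ISD_{-α}(G) whenever m ≥ 1. -/

import Mathlib

open Real Finset

noncomputable def SDD {V : Type*} [Fintype V] (G : SimpleGraph V) [DecidableRel G.Adj]
    (α : ℝ) : ℝ :=
  ∑ e ∈ G.edgeFinset, Sym2.lift
    ⟨fun u v => (G.degree u : ℝ) ^ α / (G.degree v : ℝ) ^ α +
                (G.degree v : ℝ) ^ α / (G.degree u : ℝ) ^ α,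
     fun u v => by ring⟩ e

noncomputable def ISD {V : Type*} [Fintype V] (G : SimpleGraph V) [DecidableRel G.Adj]
    (a : ℝ) : ℝ :=
  ∑ e ∈ G.edgeFinset, Sym2.lift
    ⟨fun u v => 1 / ((G.degree u : ℝ) ^ a + (G.degree v : ℝ) ^ a),
     fun u v => by dsimp only; rw [add_comm]⟩ e

theorem sdd_isd_inequality {V : Type*} [Fintype V] (G : SimpleGraph V) [DecidableRel G.Adj]
    (hδ : 1 ≤ G.minDegree) {α : ℝ} (hα : 0 < α) :
    (G.minDegree : ℝ) ^ α * (G.edgeFinset.card : ℝ) ^ 2 ≤ SDD G α * ISD G (-α) ∧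
    (1 ≤ G.edgeFinset.card →
      (G.minDegree : ℝ) ^ α * (G.edgeFinset.card : ℝ) ^ 2 / ISD G (-α) ≤ SDD G α) := by
  classical
  set D : ℝ := (G.minDegree : ℝ) ^ α with hDdef
  have hδ1 : (1:ℝ) ≤ (G.minDegree : ℝ) := by exact_mod_cast hδ
  have hD0 : 0 < D := Real.rpow_pos_of_pos (by linarith) α
  set f : Sym2 V → ℝ := fun e => Sym2.lift
    ⟨fun u v => (G.degree u : ℝ) ^ α / (G.degree v : ℝ) ^ α +
                (G.degree v : ℝ) ^ α / (G.degree u : ℝ) ^ α,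
     fun u v => by ring⟩ e with hf
  set g : Sym2 V → ℝ := fun e => Sym2.lift
    ⟨fun u v => 1 / ((G.degree u : ℝ) ^ (-α) + (G.degree v : ℝ) ^ (-α)),
     fun u v => by dsimp only; rw [add_comm]⟩ e with hg
  have hSDD : SDD G α = ∑ e ∈ G.edgeFinset, f e := rfl
  have hISD : ISD G (-α) = ∑ e ∈ G.edgeFinset, g e := rfl
  have key : ∀ e ∈ G.edgeFinset, 0 < f e ∧ 0 < g e ∧ D ≤ f e * g e := by
    intro e
    induction e using Sym2.ind with
    | _ u v =>
      intro he
      have hadj : G.Adj u v := by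
        rw [SimpleGraph.mem_edgeFinset] at he
        exact he
      haveI : Nonempty V := ⟨u⟩
      have hu : (G.minDegree : ℝ) ≤ (G.degree u : ℝ) := by
        exact_mod_cast G.minDegree_le_degree u
      have hv : (G.minDegree : ℝ) ≤ (G.degree v : ℝ) := by
        exact_mod_cast G.minDegree_le_degree v
      have hu0 : (0:ℝ) < (G.degree u : ℝ) := by linarith
      have hv0 : (0:ℝ) < (G.degree v : ℝ) := by linarith
      set x : ℝ := (G.degree u : ℝ) ^ α with hxdef
      set y : ℝ := (G.degree v : ℝ) ^ α with hydef
      have hx0 : 0 < x := Real.rpow_pos_of_pos hu0 α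
      have hy0 : 0 < y := Real.rpow_pos_of_pos hv0 α
      have hDx : D ≤ x := Real.rpow_le_rpow (by linarith) hu hα.le
      have hDy : D ≤ y := Real.rpow_le_rpow (by linarith) hv hα.le
      have hfe : f s(u, v) = x / y + y / x := by simp [hf, hxdef, hydef]
      have hge : g s(u, v) = 1 / (x⁻¹ + y⁻¹) := by
        simp [hg, Real.rpow_neg hu0.le, Real.rpow_neg hv0.le, hxdef, hydef]
      refine ⟨by rw [hfe]; positivity, by rw [hge]; positivity, ?_⟩
      rw [hfe, hge]
      have hprod : (x / y + y / x) * (1 / (x⁻¹ + y⁻¹)) = (x ^ 2 + y ^ 2) / (x + y) := by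
        field_simp
        ring
      rw [hprod, le_div_iff₀ (by positivity)]
      nlinarith [mul_nonneg hx0.le (sub_nonneg.2 hDx), mul_nonneg hy0.le (sub_nonneg.2 hDy)]
  have cs := Finset.sum_mul_sq_le_sq_mul_sq G.edgeFinset
    (fun e => Real.sqrt (f e)) (fun e => Real.sqrt (g e))
  have h1 : ∑ e ∈ G.edgeFinset, Real.sqrt (f e) ^ 2 = SDD G α := by
    rw [hSDD]
    exact Finset.sum_congr rfl fun e he => Real.sq_sqrt (key e he).1.le
  have h2 : ∑ e ∈ G.edgeFinset, Real.sqrt (g e) ^ 2 = ISD G (-α) := by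
    rw [hISD]
    exact Finset.sum_congr rfl fun e he => Real.sq_sqrt (key e he).2.1.le
  have hlow : (G.edgeFinset.card : ℝ) * Real.sqrt D ≤
      ∑ e ∈ G.edgeFinset, Real.sqrt (f e) * Real.sqrt (g e) := by
    calc (G.edgeFinset.card : ℝ) * Real.sqrt D
        = ∑ _e ∈ G.edgeFinset, Real.sqrt D := by
          rw [Finset.sum_const, nsmul_eq_mul]
      _ ≤ ∑ e ∈ G.edgeFinset, Real.sqrt (f e) * Real.sqrt (g e) := by
          refine Finset.sum_le_sum fun e he => ?_
          rw [← Real.sqrt_mul (key e he).1.le]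
          exact Real.sqrt_le_sqrt (key e he).2.2
  have hmain : D * (G.edgeFinset.card : ℝ) ^ 2 ≤ SDD G α * ISD G (-α) := by
    have hsq : ((G.edgeFinset.card : ℝ) * Real.sqrt D) ^ 2 ≤
        (∑ e ∈ G.edgeFinset, Real.sqrt (f e) * Real.sqrt (g e)) ^ 2 := by
      apply pow_le_pow_left₀ (mul_nonneg (Nat.cast_nonneg _) (Real.sqrt_nonneg _)) hlow
    have : ((G.edgeFinset.card : ℝ) * Real.sqrt D) ^ 2 = D * (G.edgeFinset.card : ℝ) ^ 2 := by
      rw [mul_pow, Real.sq_sqrt hD0.le]; ring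
    rw [← this]
    calc ((G.edgeFinset.card : ℝ) * Real.sqrt D) ^ 2
        ≤ (∑ e ∈ G.edgeFinset, Real.sqrt (f e) * Real.sqrt (g e)) ^ 2 := hsq
      _ ≤ (∑ e ∈ G.edgeFinset, Real.sqrt (f e) ^ 2) * (∑ e ∈ G.edgeFinset, Real.sqrt (g e) ^ 2) := cs
      _ = SDD G α * ISD G (-α) := by rw [h1, h2]
  refine ⟨hmain, fun hm => ?_⟩
  have hne : G.edgeFinset.Nonempty := Finset.card_pos.mp hm
  have hISDpos : 0 < ISD G (-α) := by
    rw [hISD]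
    exact Finset.sum_pos (fun e he => (key e he).2.1) hne
  rw [div_le_iff₀ hISDpos]
  exact hmain
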